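/- Let G⃗ be a rooted extraction order (a rooted directed acyclic graph in which every node is reachable from the root) with the confluence edge label assignment. Then for every node i and every pair of in-edges e, e' of i, the label sets of e and e' are equal. -/

import Mathlib

/-- A directed path in the digraph `A` from `i` to `j`, given as its list of vertices. -/
def DiPath {V : Type*} (A : V → V → Prop) (i j : V) (l : List V) : Prop :=
  List.Chain' A l ∧ l.head? = some i ∧ l.getLast? = some j ∧ l.Nodup ∧ 2 ≤ l.length

/-- A confluence from `i` to `j`: a pair of distinct directed paths from `i` to `j`
that are node-disjoint except for their shared start and end nodes. -/
def IsConfluence {V : Type*} (A : V → V → Prop) (i j : V) (l₁ l₂ : List V) : Prop :=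
  DiPath A i j l₁ ∧ DiPath A i j l₂ ∧ l₁ ≠ l₂ ∧
  ∀ v ∈ l₁, v ∈ l₂ → v = i ∨ v = j

/-- The confluence edge label assignment: the edge `e` is labeled with `j` iff `e`
lies on some confluence ending in `j`. -/
def ConfLabel {V : Type*} (A : V → V → Prop) (e : V × V) (j : V) : Prop :=
  ∃ i l₁ l₂, IsConfluence A i j l₁ l₂ ∧ (e ∈ l₁.zip l₁.tail ∨ e ∈ l₂.zip l₂.tail)

/-- The confluence label set of an edge. -/
def ConfSet {V : Type*} (A : V → V → Prop) (e : V × V) : Set V :=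
  {j | ConfLabel A e j}

/-- The digraph `A` is acyclic. -/
def Acyclic {V : Type*} (A : V → V → Prop) : Prop :=
  ∀ v, ¬ Relation.TransGen A v v

/-- Every node of the digraph `A` is reachable from the root `r`. -/
def RootedAt {V : Type*} (A : V → V → Prop) (r : V) : Prop :=
  ∀ v, Relation.ReflTransGen A r v


open List Relation

section Helpers

variable {V : Type*} {A : V → V → Prop}

/-- getLast? of an append with nonempty right part. -/
lemma getLast?_append_right' {l l' : List V} (h : l' ≠ []) :
    (l ++ l').getLast? = l'.getLast? := by
  rw [List.getLast?_append]
  rw [List.getLast?_eq_getLast h]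
  rfl

/-- Characterization of edges of a list. -/
lemma mem_zip_tail {l : List V} {a b : V} :
    (a, b) ∈ l.zip l.tail ↔ ∃ s t, l = s ++ a :: b :: t := by
  induction l with
  | nil => simp
  | cons x l ih =>
    cases l with
    | nil =>
      constructor
      · intro h; simp at h
      · rintro ⟨s, t, hsu⟩
        have := congrArg List.length hsu
        simp at this
        omega
    | cons y t =>
      constructor
      · intro h
        rcases List.mem_cons.1 h with h | h
        · obtain ⟨rfl, rfl⟩ : a = x ∧ b = y := by simpa [Prod.ext_iff] using h
          exact ⟨[], t, rfl⟩
        · obtain ⟨s, u, hsu⟩ := ih.1 h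
          exact ⟨x :: s, u, by rw [List.cons_append, ← hsu]⟩
      · rintro ⟨s, u, hsu⟩
        cases s with
        | nil =>
          obtain ⟨rfl, rfl, rfl⟩ : x = a ∧ y = b ∧ t = u := by simpa using hsu
          simp
        | cons z s =>
          obtain ⟨rfl, hrest⟩ : x = z ∧ y :: t = s ++ a :: b :: u := by simpa using hsu
          exact List.mem_cons_of_mem _ (ih.2 ⟨s, u, hrest⟩)

lemma fst_mem_of_mem_zip_tail {l : List V} {a b : V} (h : (a, b) ∈ l.zip l.tail) : a ∈ l := by
  obtain ⟨s, t, rfl⟩ := mem_zip_tail.1 h; simp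

lemma snd_mem_of_mem_zip_tail {l : List V} {a b : V} (h : (a, b) ∈ l.zip l.tail) : b ∈ l := by
  obtain ⟨s, t, rfl⟩ := mem_zip_tail.1 h; simp

/-- Reflexive-transitive reachability along a chain from head to last. -/
lemma rtg_of_chain' {l : List V} {a b : V} (hc : l.Chain' A) (ha : l.head? = some a)
    (hb : l.getLast? = some b) : Relation.ReflTransGen A a b := by
  cases l with
  | nil => simp at ha
  | cons x t =>
    have hx : x = a := by simpa using ha
    have hlast : (x :: t).getLast (List.cons_ne_nil _ _) = b := by
      have h2 := List.getLast?_eq_getLast (l := x :: t) (List.cons_ne_nil _ _)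
      rw [h2] at hb
      exact Option.some_injective _ hb
    exact hx ▸ List.relationReflTransGen_of_exists_isChain_cons t hc hlast

/-- From the head of a chain, every member is reachable. -/
lemma rtg_head_mem {l : List V} {a v : V} (hc : l.Chain' A) (ha : l.head? = some a)
    (hv : v ∈ l) : Relation.ReflTransGen A a v := by
  obtain ⟨s, t, rfl⟩ := List.append_of_mem hv
  have hpre : (s ++ [v]).Chain' A := hc.prefix ⟨t, by simp⟩
  refine rtg_of_chain' hpre ?_ (by simp)
  rw [← ha]
  cases s <;> simp

/-- Every member of a chain reaches the last element. -/
lemma rtg_mem_last {l : List V} {b v : V} (hc : l.Chain' A) (hb : l.getLast? = some b)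
    (hv : v ∈ l) : Relation.ReflTransGen A v b := by
  obtain ⟨s, t, rfl⟩ := List.append_of_mem hv
  have hsuf : (v :: t).Chain' A := hc.suffix ⟨s, rfl⟩
  refine rtg_of_chain' hsuf rfl ?_
  rw [← hb, getLast?_append_right' (List.cons_ne_nil _ _)]

/-- Last element of a list satisfying a predicate, splitting the list. -/
lemma exists_last_satisfying {l : List V} {P : V → Prop} (h : ∃ v ∈ l, P v) :
    ∃ s t u, l = s ++ t :: u ∧ P t ∧ ∀ v ∈ u, ¬ P v := by
  induction l with
  | nil => simp at h
  | cons a l ih =>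
    by_cases h' : ∃ v ∈ l, P v
    · obtain ⟨s, t, u, heq, hP, hu⟩ := ih h'
      exact ⟨a :: s, t, u, by rw [List.cons_append, heq], hP, hu⟩
    · have hPa : P a := by
        obtain ⟨v, hv, hPv⟩ := h
        rcases List.mem_cons.1 hv with rfl | hv
        · exact hPv
        · exact absurd ⟨v, hv, hPv⟩ h'
      exact ⟨[], a, l, rfl, hPa, fun v hv hPv => h' ⟨v, hv, hPv⟩⟩

/-- Any nonempty chain can be shortcut to a nodup chain with the same endpoints. -/
lemma exists_nodup_chain' {l : List V} (hc : l.Chain' A) (hne : l ≠ []) :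
    ∃ m : List V, m.Chain' A ∧ m.head? = l.head? ∧ m.getLast? = l.getLast? ∧ m.Nodup ∧
      ∀ v ∈ m, v ∈ l := by
  induction l with
  | nil => exact absurd rfl hne
  | cons a l ih =>
    cases l with
    | nil => exact ⟨[a], List.isChain_singleton a, rfl, rfl, by simp, by simp⟩
    | cons b t =>
      obtain ⟨m, hm, hh, hl, hnd, hsub⟩ := ih hc.tail (by simp)
      by_cases ha : a ∈ m
      · obtain ⟨s, u, rfl⟩ := List.append_of_mem ha
        refine ⟨a :: u, hm.suffix ⟨s, rfl⟩, rfl, ?_, ?_, ?_⟩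
        · rw [← getLast?_append_right' (l := s) (List.cons_ne_nil _ _), hl,
            List.getLast?_cons_cons]
        · exact List.Nodup.sublist (List.sublist_append_right s (a :: u)) hnd
        · intro v hv
          exact List.mem_cons_of_mem _ (hsub v (List.mem_append_right s hv))
      · have hmb : m.head? = some b := by rw [hh]; rfl
        have hmne : m ≠ [] := by intro h; rw [h] at hmb; simp at hmb
        have hab : A a b := (List.isChain_cons_cons.1 hc).1
        refine ⟨a :: m, ?_, rfl, ?_, ?_, ?_⟩
        · refine List.isChain_cons.2 ⟨?_, hm⟩
          intro y hy
          rw [hmb] at hy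
          obtain rfl : b = y := by simpa using hy
          exact hab
        · cases m with
          | nil => exact absurd rfl hmne
          | cons c u =>
            simp only [List.getLast?_cons_cons]
            exact hl
        · exact List.nodup_cons.2 ⟨ha, hnd⟩
        · intro v hv
          rcases List.mem_cons.1 hv with rfl | hv
          · simp
          · exact List.mem_cons_of_mem _ (hsub v hv)

/-- Reachability gives a nodup path. -/
lemma exists_nodup_path {a b : V} (h : Relation.ReflTransGen A a b) :
    ∃ m : List V, m.Chain' A ∧ m.head? = some a ∧ m.getLast? = some b ∧ m.Nodup := by
  obtain ⟨l, hl, hlast⟩ := List.exists_isChain_cons_of_relationReflTransGen h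
  have hc : (a :: l).Chain' A := hl
  obtain ⟨m, hm, hh, hgl, hnd, _⟩ := exists_nodup_chain' hc (List.cons_ne_nil _ _)
  refine ⟨m, hm, by rw [hh]; rfl, ?_, hnd⟩
  rw [hgl, List.getLast?_eq_getLast (l := a :: l) (List.cons_ne_nil _ _), hlast]

/-- In a nodup list, a middle occurrence of the last element forces the tail to be empty. -/
lemma nil_of_nodup_getLast {l s t : List V} {a : V} (hnd : l.Nodup) (h : l = s ++ a :: t)
    (hl : l.getLast? = some a) : t = [] := by
  subst h
  cases t with
  | nil => rfl
  | cons b u =>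
    exfalso
    have h1 : (s ++ a :: b :: u).getLast? = (b :: u).getLast? := by
      rw [getLast?_append_right' (List.cons_ne_nil _ _), List.getLast?_cons_cons]
    rw [h1] at hl
    have hmem : a ∈ b :: u := by
      have := List.getLast?_eq_getLast (l := b :: u) (List.cons_ne_nil _ _)
      rw [this] at hl
      have := Option.some_injective _ hl
      rw [← this]
      exact List.getLast_mem _
    have : (a :: b :: u).Nodup :=
      List.Nodup.sublist (List.sublist_append_right s _) hnd
    exact (List.nodup_cons.1 this).1 hmem

end Helpers

section Main

variable {V : Type*} {A : V → V → Prop}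

/-- Core construction: given a path `R` from `r` to `k'`, an edge `k' → i`, a path
`Q = i :: Q₀` from `i` to `j` disjoint from `R`, and a second path `W₂` from `r` to `j`
meeting `Q` only in `j` and not containing the edge `(k', i)`, there is a confluence
ending in `j` containing the edge `(k', i)`. -/
lemma conf_of_paths {r j i k' : V} {R Q₀ W₂ : List V}
    (hRc : R.Chain' A) (hRh : R.head? = some r) (hRl : R.getLast? = some k') (hRnd : R.Nodup)
    (hQc : (i :: Q₀).Chain' A) (hQl : (i :: Q₀).getLast? = some j) (hQnd : (i :: Q₀).Nodup)
    (hki : A k' i)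
    (hdisjRQ : ∀ v ∈ R, v ∉ i :: Q₀)
    (hWc : W₂.Chain' A) (hWh : W₂.head? = some r) (hWl : W₂.getLast? = some j)
    (hWnd : W₂.Nodup)
    (hQW : ∀ v ∈ i :: Q₀, v ∈ W₂ → v = j)
    (hedge : (k', i) ∉ W₂.zip W₂.tail) :
    ConfLabel A (k', i) j := by
  set Q : List V := i :: Q₀ with hQdef
  have hrR : r ∈ R := List.mem_of_mem_head? (by rw [hRh]; rfl)
  have hrW : r ∈ W₂ := List.mem_of_mem_head? (by rw [hWh]; rfl)
  -- last element of R lying on W₂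
  obtain ⟨s₁, t, u₁, hRsplit, htW, hu₁⟩ :=
    exists_last_satisfying (P := fun v => v ∈ W₂) ⟨r, hrR, hrW⟩
  obtain ⟨s₂, u₂, hWsplit⟩ := List.append_of_mem htW
  have hjQ : j ∈ Q := by
    obtain ⟨c, hc⟩ := List.getLast?_eq_some_iff.1 hQl
    rw [hc]; simp
  have htR : t ∈ R := by rw [hRsplit]; simp
  have htj : t ≠ j := fun h => hdisjRQ t htR (h ▸ hjQ)
  have hu₂ne : u₂ ≠ [] := by
    intro h
    rw [h] at hWsplit
    rw [hWsplit, getLast?_append_right' (List.cons_ne_nil _ _)] at hWl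
    exact htj (by simpa using hWl)
  -- the full first path W₁ = R ++ Q
  have hW₁c : (R ++ Q).Chain' A := by
    refine List.isChain_append.2 ⟨hRc, hQc, ?_⟩
    intro x hx y hy
    rw [hRl] at hx
    obtain rfl : k' = x := by simpa using hx
    rw [hQdef] at hy
    obtain rfl : i = y := by simpa using hy
    exact hki
  have hW₁nd : (R ++ Q).Nodup := List.nodup_append.2 ⟨hRnd, hQnd, fun a ha b hb hab => hdisjRQ a ha (hab ▸ hb)⟩
  -- branch 1
  set B₁ : List V := (t :: u₁) ++ Q with hB₁def
  have hB₁suf : B₁ <:+ R ++ Q := ⟨s₁, by rw [hRsplit]; simp [hB₁def]⟩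
  have hB₁c : B₁.Chain' A := hW₁c.suffix hB₁suf
  have hB₁h : B₁.head? = some t := rfl
  have hB₁l : B₁.getLast? = some j := by
    rw [hB₁def, getLast?_append_right' (List.cons_ne_nil _ _), hQl]
  have hB₁nd : B₁.Nodup := List.Nodup.sublist hB₁suf.sublist hW₁nd
  have hB₁len : 2 ≤ B₁.length := by
    rw [hB₁def, hQdef]
    simp [List.length_append]
    omega
  -- branch 2
  set B₂ : List V := t :: u₂ with hB₂def
  have hB₂suf : B₂ <:+ W₂ := ⟨s₂, hWsplit.symm⟩
  have hB₂c : B₂.Chain' A := hWc.suffix hB₂suf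
  have hB₂l : B₂.getLast? = some j := by
    rw [← hWl, hWsplit, getLast?_append_right' (List.cons_ne_nil _ _)]
  have hB₂nd : B₂.Nodup := List.Nodup.sublist hB₂suf.sublist hWnd
  have hB₂len : 2 ≤ B₂.length := by
    cases u₂ with
    | nil => exact absurd rfl hu₂ne
    | cons a u => simp [hB₂def]
  have hB₂W : ∀ v ∈ B₂, v ∈ W₂ := fun v hv => hWsplit ▸ List.mem_append_right s₂ hv
  -- the edge (k', i) lies on branch 1
  have htu₁l : (t :: u₁).getLast? = some k' := by
    rw [← hRl, hRsplit, getLast?_append_right' (List.cons_ne_nil _ _)]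
  obtain ⟨c, hc⟩ := List.getLast?_eq_some_iff.1 htu₁l
  have hedge₁ : (k', i) ∈ B₁.zip B₁.tail := by
    refine mem_zip_tail.2 ⟨c, Q₀, ?_⟩
    rw [hB₁def, hc]
    simp [hQdef]
  -- disjointness
  have hdisj : ∀ v ∈ B₁, v ∈ B₂ → v = t ∨ v = j := by
    intro v hv₁ hv₂
    rw [hB₁def] at hv₁
    rcases List.mem_append.1 hv₁ with hv | hv
    · rcases List.mem_cons.1 hv with rfl | hv
      · exact Or.inl rfl
      · exact absurd (hB₂W v hv₂) (hu₁ v hv)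
    · exact Or.inr (hQW v hv (hB₂W v hv₂))
  -- distinctness
  have hne : B₁ ≠ B₂ := by
    intro h
    apply hedge
    obtain ⟨x, y, hxy⟩ := mem_zip_tail.1 (h ▸ hedge₁)
    refine mem_zip_tail.2 ⟨s₂ ++ x, y, ?_⟩
    rw [hWsplit, hxy]
    exact (List.append_assoc _ _ _).symm
  exact ⟨t, B₁, B₂, ⟨⟨hB₁c, hB₁h, hB₁l, hB₁nd, hB₁len⟩, ⟨hB₂c, rfl, hB₂l, hB₂nd, hB₂len⟩,
    hne, hdisj⟩, Or.inl hedge₁⟩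

/-- If the edge `(k, i)` lies on the first branch of a confluence ending in `j`, and
`k' → i` is another in-edge of `i`, then some confluence ending in `j` contains `(k', i)`. -/
lemma conf_step {r i k k' j s : V} {l₁ l₂ : List V}
    (hac : Acyclic A) (hr : RootedAt A r) (hk : A k i) (hk' : A k' i) (hkk' : k ≠ k')
    (hconf : IsConfluence A s j l₁ l₂) (hmem : (k, i) ∈ l₁.zip l₁.tail) :
    ConfLabel A (k', i) j := by
  obtain ⟨⟨h1c, h1h, h1l, h1nd, h1len⟩, ⟨h2c, h2h, h2l, h2nd, h2len⟩, hll, hdisj⟩ := hconf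
  obtain ⟨P₀, Q₀, rfl⟩ := mem_zip_tail.1 hmem
  -- the suffix path Q from i to j
  have hQsuf : (i :: Q₀) <:+ P₀ ++ k :: i :: Q₀ := ⟨P₀ ++ [k], by simp⟩
  have hQc : (i :: Q₀).Chain' A := h1c.suffix hQsuf
  have hQl : (i :: Q₀).getLast? = some j := by
    rw [← h1l, ← getLast?_append_right' (l := P₀ ++ [k]) (List.cons_ne_nil i Q₀)]
    simp
  have hQnd : (i :: Q₀).Nodup := List.Nodup.sublist hQsuf.sublist h1nd
  have hQsub : ∀ v ∈ i :: Q₀, v ∈ P₀ ++ k :: i :: Q₀ := fun v hv => by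
    rcases List.mem_cons.1 hv with rfl | hv <;> simp [hv]
  -- reachability facts
  have hkl₁ : k ∈ P₀ ++ k :: i :: Q₀ := by simp
  have hil₁ : i ∈ P₀ ++ k :: i :: Q₀ := by simp
  have rtg_s_k : Relation.ReflTransGen A s k := rtg_head_mem h1c h1h hkl₁
  have tg_s_i : Relation.TransGen A s i := Relation.TransGen.tail' rtg_s_k hk
  have his : i ≠ s := fun h => hac s (h ▸ tg_s_i)
  -- a nodup path R from r to k'
  obtain ⟨R, hRc, hRh, hRl, hRnd⟩ := exists_nodup_path (hr k')
  have hdisjRQ : ∀ v ∈ R, v ∉ i :: Q₀ := by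
    intro v hvR hvQ
    have h1 : Relation.ReflTransGen A i v := rtg_head_mem hQc rfl hvQ
    have h2 : Relation.ReflTransGen A v k' := rtg_mem_last hRc hRl hvR
    exact hac i (Relation.TransGen.tail' (h1.trans h2) hk')
  by_cases hij : i = j
  · -- case i = j : use a path to k as the second branch
    subst hij
    obtain rfl : Q₀ = [] := nil_of_nodup_getLast (s := []) hQnd rfl hQl
    obtain ⟨Rk, hkc, hkh, hkl, hknd⟩ := exists_nodup_path (hr k)
    have hiRk : i ∉ Rk := by
      intro hmem'
      exact hac i (Relation.TransGen.tail' (rtg_mem_last hkc hkl hmem') hk)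
    have hWc : (Rk ++ [i]).Chain' A := by
      refine List.isChain_append.2 ⟨hkc, by simp, ?_⟩
      intro x hx y hy
      rw [hkl] at hx
      obtain rfl : k = x := by simpa using hx
      obtain rfl : i = y := by simpa using hy
      exact hk
    have hWh : (Rk ++ [i]).head? = some r := by
      rw [List.head?_append, hkh]; rfl
    have hWl : (Rk ++ [i]).getLast? = some i := by
      rw [getLast?_append_right' (List.cons_ne_nil _ _)]; rfl
    have hWnd : (Rk ++ [i]).Nodup :=
      List.nodup_append.2 ⟨hknd, List.nodup_singleton i, by
        intro a ha b hb hab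
        obtain rfl : b = i := by simpa using hb
        exact hiRk (hab ▸ ha)⟩
    refine conf_of_paths hRc hRh hRl hRnd hQc hQl hQnd hk' hdisjRQ hWc hWh hWl hWnd
      (by intro v hv _; simpa using hv) ?_
    intro hedge
    obtain ⟨x, y, hxy⟩ := mem_zip_tail.1 hedge
    have hy : y = [] :=
      nil_of_nodup_getLast (s := x ++ [k']) hWnd (by rw [hxy]; simp) hWl
    subst hy
    have hRkx : Rk = x ++ [k'] := by
      have := congrArg List.dropLast hxy
      rw [List.dropLast_concat] at this
      rw [this]
      have : x ++ [k', i] = (x ++ [k']) ++ [i] := by simp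
      rw [this, List.dropLast_concat]
    rw [hRkx, getLast?_append_right' (List.cons_ne_nil _ _)] at hkl
    exact hkk' (by simpa using hkl.symm)
  · -- case i ≠ j : shortcut a path through s and l₂ as the second branch
    obtain ⟨S, hSc, hSh, hSl, hSnd⟩ := exists_nodup_path (hr s)
    obtain ⟨l₂', rfl⟩ : ∃ t, l₂ = s :: t := by
      cases l₂ with
      | nil => simp at h2h
      | cons a u =>
        refine ⟨u, ?_⟩
        obtain rfl : a = s := by simpa using h2h
        rfl
    have hl₂'ne : l₂' ≠ [] := by
      intro h; rw [h] at h2len; simp at h2len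
    have hWc0 : (S ++ l₂').Chain' A := by
      refine List.isChain_append.2 ⟨hSc, h2c.tail, ?_⟩
      intro x hx y hy
      rw [hSl] at hx
      obtain rfl : s = x := by simpa using hx
      exact (List.isChain_cons.1 h2c).1 y (by simpa using hy)
    have hWh0 : (S ++ l₂').head? = some r := by
      rw [List.head?_append, hSh]; rfl
    have hWl0 : (S ++ l₂').getLast? = some j := by
      rw [getLast?_append_right' hl₂'ne, ← h2l]
      cases l₂' with
      | nil => exact absurd rfl hl₂'ne
      | cons a u => rw [List.getLast?_cons_cons]
    obtain ⟨W₂, hWc, hWh', hWl', hWnd, hWsub⟩ := exists_nodup_chain' hWc0 (by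
      intro h
      have := congrArg List.length h
      simp at this
      exact hl₂'ne this.2)
    rw [hWh0] at hWh'
    rw [hWl0] at hWl'
    have rtg_s_i : Relation.ReflTransGen A s i := rtg_head_mem h1c h1h hil₁
    have hQW : ∀ v ∈ i :: Q₀, v ∈ W₂ → v = j := by
      intro v hvQ hvW
      by_contra hvj
      have hrtg_iv : Relation.ReflTransGen A i v := rtg_head_mem hQc rfl hvQ
      have hsQ : s ∈ i :: Q₀ → False := by
        intro hs
        exact hac i (Relation.TransGen.trans_right (rtg_head_mem hQc rfl hs) tg_s_i)
      rcases List.mem_append.1 (hWsub v hvW) with hvS | hvl₂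
      · have hrtg_vs : Relation.ReflTransGen A v s := rtg_mem_last hSc hSl hvS
        exact hac i (Relation.TransGen.trans_right (hrtg_iv.trans hrtg_vs)
          (Relation.TransGen.tail' rtg_s_k hk))
      · have hvl₂' : v ∈ s :: l₂' := List.mem_cons_of_mem _ hvl₂
        rcases hdisj v (hQsub v hvQ) hvl₂' with rfl | rfl
        · exact hsQ hvQ
        · exact hvj rfl
    refine conf_of_paths hRc hRh hRl hRnd hQc hQl hQnd hk' hdisjRQ hWc hWh' hWl' hWnd hQW ?_
    intro hedge
    exact hij (hQW i (by simp) (snd_mem_of_mem_zip_tail hedge))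

/-- One-sided version of the main theorem. -/
lemma confLabel_mono {r i k k' j : V}
    (hac : Acyclic A) (hr : RootedAt A r) (hk : A k i) (hk' : A k' i)
    (h : ConfLabel A (k, i) j) : ConfLabel A (k', i) j := by
  by_cases hkk' : k = k'
  · exact hkk' ▸ h
  · obtain ⟨s, l₁, l₂, hconf, hmem | hmem⟩ := h
    · exact conf_step hac hr hk hk' hkk' hconf hmem
    · exact conf_step hac hr hk hk' hkk'
        ⟨hconf.2.1, hconf.1, hconf.2.2.1.symm, fun v hv2 hv1 => hconf.2.2.2 v hv1 hv2⟩ hmem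

end Main

/-- In a rooted extraction order with the confluence edge label assignment, any two
in-edges of a node `i` have equal label sets. -/
theorem stmt10 {V : Type*} (A : V → V → Prop) (r : V) (hac : Acyclic A)
    (hr : RootedAt A r) (i k k' : V) (hk : A k i) (hk' : A k' i) :
    ConfSet A (k, i) = ConfSet A (k', i) := by
  ext j
  exact ⟨fun h => confLabel_mono hac hr hk hk' h, fun h => confLabel_mono hac hr hk' hk h⟩
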